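/- If z_1, ..., z_d are the roots (with multiplicity) in an algebraic closure of F_q of an affine p-polynomial ℓ(x) = L(x) - α of degree d = p^h, where L is a separable linearized polynomial over F_q (all exponents of nonzero monomials are powers of p = char(F_q)) and α ∈ F_q, then the power sums π_i = z_1^i + ... + z_d^i vanish for all i = 1, ..., d-2. -/

import Mathlib

open Polynomial Finset

set_option maxRecDepth 20000 in
/-- Power sums of the roots of a separable affine p-polynomial vanish up to degree d-2. -/
theorem power_sums_of_affine_p_polynomial_roots_vanish
    (F : Type*) [Field F] [Fintype F]
    (p h : ℕ) (hp : p = ringChar F)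
    (L : Polynomial F)
    (hlin : ∀ n : ℕ, L.coeff n ≠ 0 → ∃ k : ℕ, n = p ^ k)
    (hsep : L.Separable)
    (d : ℕ) (hd : d = p ^ h) (hdeg : L.natDegree = d)
    (α : F) (z : Fin d → AlgebraicClosure F)
    (hz : (L - C α).map (algebraMap F (AlgebraicClosure F)) =
      ∏ j : Fin d, (X - C (z j))) :
    ∀ i : ℕ, 1 ≤ i → i ≤ d - 2 → ∑ j : Fin d, z j ^ i = 0 := by
  intro i hi1 hi2
  have hd3 : 3 ≤ d := by omega
  have hcharF : CharP F p := hp ▸ ringChar.charP F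
  have hpprime : p.Prime := CharP.char_is_prime F p
  have hcharR : CharP (AlgebraicClosure F) p :=
    charP_of_injective_algebraMap (algebraMap F (AlgebraicClosure F)).injective p
  set w : Fin d → AlgebraicClosure F := fun j => -(z j) with hw
  have hprod : (L - C α).map (algebraMap F (AlgebraicClosure F)) = ∏ j : Fin d, (X + C (w j)) := by
    rw [hz]; simp [hw, sub_eq_add_neg]
  set E : ℕ → AlgebraicClosure F :=
    fun m => ∑ t ∈ powersetCard m (univ : Finset (Fin d)), ∏ j ∈ t, w j with hE
  set P : ℕ → AlgebraicClosure F := fun n => ∑ j : Fin d, w j ^ n with hP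
  have hcard : #(univ : Finset (Fin d)) = d := by simp
  -- elementary symmetric functions vanish off p-power coefficient indices
  have hEzero : ∀ m : ℕ, 1 ≤ m → m ≤ d - 1 → (¬ ∃ k, d - m = p ^ k) → E m = 0 := by
    intro m hm1 hm2 hnot
    have hk : d - m ≤ #(univ : Finset (Fin d)) := by rw [hcard]; omega
    have hv := Finset.prod_X_add_C_coeff (univ : Finset (Fin d)) w hk
    rw [← hprod, hcard] at hv
    have hdm : d - (d - m) = m := by omega
    rw [hdm] at hv
    have hLc : L.coeff (d - m) = 0 := by
      by_contra hne
      exact hnot (hlin _ hne)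
    show ∑ t ∈ powersetCard m (univ : Finset (Fin d)), ∏ j ∈ t, w j = 0
    rw [← hv, coeff_map, coeff_sub, coeff_C, if_neg (by omega), hLc]
    simp
  -- in characteristic p, m * E m = 0 for 1 ≤ m ≤ d - 2
  have hmE : ∀ m : ℕ, 1 ≤ m → m ≤ d - 2 → (m : AlgebraicClosure F) * E m = 0 := by
    intro m hm1 hm2
    by_cases hEm : E m = 0
    · rw [hEm, mul_zero]
    · obtain ⟨k, hk⟩ : ∃ k, d - m = p ^ k := by
        by_contra hnot
        exact hEm (hEzero m hm1 (by omega) hnot)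
      have hp2 : 2 ≤ p := hpprime.two_le
      have hkh : k < h := by
        have : p ^ k < p ^ h := by omega
        exact (pow_lt_pow_iff_right₀ (by omega)).mp this
      have hk1 : 1 ≤ k := by
        rcases Nat.eq_zero_or_pos k with h0 | h1
        · subst h0; simp at hk; omega
        · exact h1
      have hpd : p ∣ m := by
        have h1 : p ∣ p ^ k := dvd_pow_self p (by omega)
        have h2 : p ∣ p ^ h := dvd_pow_self p (by omega)
        have hm : m = p ^ h - p ^ k := by omega
        rw [hm]
        exact Nat.dvd_sub h2 h1
      have : (m : AlgebraicClosure F) = 0 := (CharP.cast_eq_zero_iff (AlgebraicClosure F) p m).mpr hpd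
      rw [this, zero_mul]
  -- Newton's identities, evaluated at w
  have hNewton : ∀ k : ℕ, 0 < k →
      P k = (-1) ^ (k + 1) * (k : AlgebraicClosure F) * E k -
        ∑ a ∈ antidiagonal k with a.1 ∈ Set.Ioo 0 k, (-1) ^ a.1 * E a.1 * P a.2 := by
    intro k hk
    have := congrArg (MvPolynomial.eval w)
      (MvPolynomial.psum_eq_mul_esymm_sub_sum (Fin d) (AlgebraicClosure F) k hk)
    simpa [MvPolynomial.psum, MvPolynomial.esymm, hE, hP] using this
  -- strong induction: P m = 0 for 1 ≤ m ≤ d - 2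
  have key : ∀ n : ℕ, ∀ m : ℕ, m ≤ n → 1 ≤ m → m ≤ d - 2 → P m = 0 := by
    intro n
    induction n with
    | zero => intro m hm h1 _; omega
    | succ n ih =>
      intro m hm h1 h2
      rcases Nat.lt_or_ge m (n + 1) with hlt | hge
      · exact ih m (by omega) h1 h2
      · rw [hNewton m (by omega)]
        have hterm : (-1 : AlgebraicClosure F) ^ (m + 1) * (m : AlgebraicClosure F) * E m = 0 := by
          rw [mul_assoc, hmE m h1 h2, mul_zero]
        rw [hterm, zero_sub, neg_eq_zero]
        apply Finset.sum_eq_zero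
        intro a ha
        simp only [mem_filter, Finset.HasAntidiagonal.mem_antidiagonal, Set.mem_Ioo] at ha
        have hP2 : P a.2 = 0 := ih a.2 (by omega) (by omega) (by omega)
        rw [hP2, mul_zero]
  have hPi : P i = 0 := key i i le_rfl hi1 hi2
  have hnp : ∀ a : AlgebraicClosure F, (-a) ^ i = (-1) ^ i * a ^ i := fun a => neg_pow a i
  have hfin : ∑ j : Fin d, z j ^ i = (-1) ^ i * P i := by
    show ∑ j : Fin d, z j ^ i = (-1) ^ i * ∑ j : Fin d, w j ^ i
    rw [Finset.mul_sum]
    apply Finset.sum_congr rfl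
    intro j _
    rw [show w j = -(z j) from rfl, hnp (z j), ← mul_assoc, ← mul_pow, neg_mul_neg, one_mul, one_pow,
      one_mul]
  rw [hfin, hPi, mul_zero]
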